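/- Let E be a real m×n matrix of full column rank, l = (1/n)·E𝟙 the vector of row means, q ∈ ℝ^m a vector with Eᵀq = 𝟙, and let W₁,…,W_m be orthonormal eigenvectors of EEᵀ with eigenvalues ψ₁ ≥ … ≥ ψ_m ≥ 0. Write q = Σ_{j=1}^{m} α_j W_j with α₁ ≠ 0 and ψ₁ > 0. Then l = (1/n)·Σ_{j=1}^{m} α_j ψ_j W_j, and the sine of the angle between the line span{l} and the line span{W₁} is at most (ψ₂/ψ₁) · (sqrt(Σ_{j=2}^{m} α_j²))/|α₁|. -/

import Mathlib

open Finset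

/-- Euclidean inner product on `ℝ^m`. -/
noncomputable def ip {m : ℕ} (u v : Fin m → ℝ) : ℝ := ∑ i, u i * v i

/-- Euclidean norm on `ℝ^m`. -/
noncomputable def enorm {m : ℕ} (v : Fin m → ℝ) : ℝ := Real.sqrt (∑ i, (v i) ^ 2)

/-- For a full column rank matrix `E`, the row-mean vector `l = (1/n)E𝟙`, a vector `q` with
`Eᵀq = 𝟙`, and orthonormal eigenvectors `W` of `EEᵀ` with eigenvalues `ψ₁ ≥ … ≥ ψ_m ≥ 0`,
if `q = Σ α_j W_j` with `α₁ ≠ 0` and `ψ₁ > 0`, then `l = (1/n) Σ α_j ψ_j W_j`, and the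
sine of the angle between `span{l}` and `span{W₁}` (namely `‖l − ⟨l,W₁⟩W₁‖/‖l‖`, `W₁`
being a unit vector) is at most `(ψ₂/ψ₁) · sqrt(Σ_{j≥2} α_j²)/|α₁|`. -/
theorem statement8 (m n : ℕ) (hm : 2 ≤ m) (hn : 0 < n)
    (E : Matrix (Fin m) (Fin n) ℝ) (hrank : E.rank = n)
    (q : Fin m → ℝ) (hq1 : E.transpose.mulVec q = fun _ => 1)
    (W : Fin m → (Fin m → ℝ)) (ψ α : Fin m → ℝ)
    (hortho : ∀ j k, ip (W j) (W k) = if j = k then (1 : ℝ) else 0)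
    (heig : ∀ j, (E * E.transpose).mulVec (W j) = ψ j • W j)
    (hsorted : ∀ j k : Fin m, j ≤ k → ψ k ≤ ψ j)
    (hnonneg : ∀ j, 0 ≤ ψ j)
    (hq : q = fun i => ∑ j, α j * W j i)
    (hα : α ⟨0, by omega⟩ ≠ 0) (hψ : 0 < ψ ⟨0, by omega⟩)
    (l : Fin m → ℝ) (hl : l = (1 / (n : ℝ)) • E.mulVec (fun _ => 1)) :
    let j0 : Fin m := ⟨0, by omega⟩
    let j1 : Fin m := ⟨1, by omega⟩
    l = (fun i => (1 / (n : ℝ)) * ∑ j, α j * ψ j * W j i) ∧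
    _root_.enorm (l - ip l (W j0) • W j0) / _root_.enorm l ≤
      (ψ j1 / ψ j0) * (Real.sqrt (∑ j ∈ Finset.univ \ {j0}, (α j) ^ 2) / |α j0|) := by
  intro j0 j1
  have hn' : (0 : ℝ) < (n : ℝ) := by exact_mod_cast hn
  -- generic: mulVec of a combination
  have hmv : ∀ (M : Matrix (Fin m) (Fin m) ℝ) (a : Fin m → ℝ) (i : Fin m),
      M.mulVec (fun k => ∑ j, a j * W j k) i = ∑ j, a j * M.mulVec (W j) i := by
    intro M a i
    simp only [Matrix.mulVec, dotProduct, Finset.mul_sum]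
    rw [Finset.sum_comm]
    apply Finset.sum_congr rfl
    intro j _
    apply Finset.sum_congr rfl
    intro k _
    ring
  -- Part 1
  have hpart1 : l = fun i => (1 / (n : ℝ)) * ∑ j, α j * ψ j * W j i := by
    have h1 : E.mulVec (fun _ => 1) = fun i => ∑ j, α j * ψ j * W j i := by
      rw [← hq1, Matrix.mulVec_mulVec]
      funext i
      rw [hq, hmv]
      apply Finset.sum_congr rfl
      intro j _
      rw [heig j]
      simp [mul_assoc]
    rw [hl, h1]
    funext i
    simp [smul_eq_mul]
  refine ⟨hpart1, ?_⟩
  -- inner products of combinations with W k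
  have hipW : ∀ (a : Fin m → ℝ) (k : Fin m),
      ip (fun i => ∑ j, a j * W j i) (W k) = a k := by
    intro a k
    unfold ip
    simp only [Finset.sum_mul]
    rw [Finset.sum_comm]
    have : ∀ j, ∑ i, a j * W j i * W k i = a j * ip (W j) (W k) := by
      intro j
      unfold ip
      rw [Finset.mul_sum]
      apply Finset.sum_congr rfl
      intro i _
      ring
    simp_rw [this, hortho]
    simp
  have hcombo : ∀ (a : Fin m → ℝ),
      (∑ i, ((∑ j, a j * W j i)) ^ 2) = ∑ j, a j ^ 2 := by
    intro a
    have : ∀ i : Fin m, (∑ j, a j * W j i) ^ 2 = ∑ j, a j * W j i * (∑ k, a k * W k i) := by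
      intro i
      rw [sq, Finset.sum_mul]
    simp_rw [this]
    rw [Finset.sum_comm]
    have h2 : ∀ j, (∑ i, a j * W j i * (∑ k, a k * W k i)) = a j * a j := by
      intro j
      have := hipW a j
      unfold ip at this
      calc (∑ i, a j * W j i * (∑ k, a k * W k i))
          = a j * ∑ i, (∑ k, a k * W k i) * W j i := by
            rw [Finset.mul_sum]; apply Finset.sum_congr rfl; intro i _; ring
        _ = a j * a j := by rw [this]
    simp_rw [h2, sq]
  set c : Fin m → ℝ := fun j => (1 / (n : ℝ)) * (α j * ψ j) with hc
  have hl' : l = fun i => ∑ j, c j * W j i := by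
    rw [hpart1]; funext i; rw [Finset.mul_sum]
    apply Finset.sum_congr rfl; intro j _; simp [hc]; ring
  set d : Fin m → ℝ := fun j => if j = j0 then 0 else c j with hd
  have hip0 : ip l (W j0) = c j0 := by rw [hl']; exact hipW c j0
  have hdiff : l - ip l (W j0) • W j0 = fun i => ∑ j, d j * W j i := by
    funext i
    have key : ∀ j, d j * W j i = c j * W j i - (if j = j0 then c j0 * W j0 i else 0) := by
      intro j; by_cases h : j = j0 <;> simp [hd, h]
    simp only [Pi.sub_apply, Pi.smul_apply, smul_eq_mul, hip0, key,
      Finset.sum_sub_distrib]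
    rw [Finset.sum_ite_eq' Finset.univ j0 (fun _ => c j0 * W j0 i)]
    simp [hl']
  -- norms
  have hnum : _root_.enorm (l - ip l (W j0) • W j0) = Real.sqrt (∑ j ∈ Finset.univ \ {j0}, c j ^ 2) := by
    rw [hdiff]
    unfold _root_.enorm
    rw [hcombo d]
    congr 1
    rw [← Finset.sum_sdiff (Finset.subset_univ {j0})]
    have h1 : ∑ j ∈ ({j0} : Finset (Fin m)), d j ^ 2 = 0 := by simp [hd]
    rw [h1, add_zero]
    apply Finset.sum_congr rfl
    intro j hj
    rw [Finset.mem_sdiff, Finset.mem_singleton] at hj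
    simp [hd, hj.2]
  have hden : _root_.enorm l = Real.sqrt (∑ j, c j ^ 2) := by
    rw [hl']; unfold _root_.enorm; rw [hcombo]
  have hc0 : c j0 = (1 / (n : ℝ)) * (α j0 * ψ j0) := rfl
  have hc0pos : 0 < |c j0| := by
    rw [abs_pos, hc0]
    positivity
  have hdenlb : (1 / (n : ℝ)) * (|α j0| * ψ j0) ≤ _root_.enorm l := by
    rw [hden]
    have h1 : c j0 ^ 2 ≤ ∑ j, c j ^ 2 :=
      Finset.single_le_sum (fun j _ => sq_nonneg (c j)) (Finset.mem_univ j0)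
    have h2 := Real.sqrt_le_sqrt h1
    rw [Real.sqrt_sq_eq_abs] at h2
    refine le_trans (le_of_eq ?_) h2
    rw [hc0, abs_mul, abs_mul]
    rw [abs_of_pos (by positivity : (0:ℝ) < 1 / (n:ℝ)), abs_of_pos hψ]
  have hψ1 : 0 ≤ ψ j1 := hnonneg j1
  have hnumub : _root_.enorm (l - ip l (W j0) • W j0) ≤
      (1 / (n : ℝ)) * ψ j1 * Real.sqrt (∑ j ∈ Finset.univ \ {j0}, (α j) ^ 2) := by
    rw [hnum]
    have h1 : ∑ j ∈ Finset.univ \ {j0}, c j ^ 2 ≤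
        ∑ j ∈ Finset.univ \ {j0}, ((1 / (n : ℝ)) * ψ j1) ^ 2 * (α j) ^ 2 := by
      apply Finset.sum_le_sum
      intro j hj
      rw [Finset.mem_sdiff, Finset.mem_singleton] at hj
      have hj1 : j1 ≤ j := by
        have : j.val ≠ 0 := fun h => hj.2 (Fin.ext h)
        exact Fin.mk_le_of_le_val (by omega)
      have hψj : ψ j ≤ ψ j1 := hsorted j1 j hj1
      have hψjn : 0 ≤ ψ j := hnonneg j
      have : c j ^ 2 = (1 / (n:ℝ))^2 * (ψ j)^2 * (α j)^2 := by rw [hc]; ring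
      rw [this]
      have hsq : (ψ j)^2 ≤ (ψ j1)^2 := by
        apply sq_le_sq' (by linarith) hψj
      have := mul_le_mul_of_nonneg_right (mul_le_mul_of_nonneg_left hsq
        (by positivity : (0:ℝ) ≤ (1 / (n:ℝ))^2)) (sq_nonneg (α j))
      calc (1 / (n:ℝ))^2 * (ψ j)^2 * (α j)^2 ≤ (1 / (n:ℝ))^2 * (ψ j1)^2 * (α j)^2 := this
        _ = ((1 / (n : ℝ)) * ψ j1) ^ 2 * (α j) ^ 2 := by ring
    have h2 := Real.sqrt_le_sqrt h1
    refine le_trans h2 (le_of_eq ?_)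
    rw [← Finset.mul_sum, Real.sqrt_mul (sq_nonneg _), Real.sqrt_sq (by positivity)]
  -- conclude
  have hdpos : 0 < (1 / (n : ℝ)) * (|α j0| * ψ j0) := by positivity
  have hfin : _root_.enorm (l - ip l (W j0) • W j0) / _root_.enorm l ≤
      ((1 / (n : ℝ)) * ψ j1 * Real.sqrt (∑ j ∈ Finset.univ \ {j0}, (α j) ^ 2)) /
      ((1 / (n : ℝ)) * (|α j0| * ψ j0)) := by
    apply div_le_div₀ (by positivity) hnumub hdpos hdenlb
  refine le_trans hfin (le_of_eq ?_)
  have hα0 : |α j0| ≠ 0 := by simpa using hα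
  field_simp
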